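/- The alternating group A₄ on four letters (the subgroup of even permutations of a four-element type, e.g. alternatingGroup (Fin 4)) has Grossman's Property A: every class-preserving automorphism of A₄ is inner. -/
import Mathlib


/-- A group `G` has Grossman's Property A if every class-preserving automorphism
(i.e. one sending each element to a conjugate of itself) is inner. -/
def HasPropertyA (G : Type*) [Group G] : Prop :=
  ∀ φ : G ≃* G, (∀ g : G, IsConj g (φ g)) → ∃ h : G, ∀ g : G, φ g = h * g * h⁻¹

section A4Aux

instance altdec : DecidablePred (· ∈ alternatingGroup (Fin 4)) :=
  fun _ => decidable_of_iff _ (Equiv.Perm.mem_alternatingGroup).symm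

private abbrev G4 := ↥(alternatingGroup (Fin 4))

private def sp : Equiv.Perm (Fin 4) := Equiv.swap 0 1 * Equiv.swap 1 2
private def tp : Equiv.Perm (Fin 4) := Equiv.swap 0 1 * Equiv.swap 2 3

private lemma sp_mem : sp ∈ alternatingGroup (Fin 4) := by decide
private lemma tp_mem : tp ∈ alternatingGroup (Fin 4) := by decide

private def s : G4 := ⟨sp, sp_mem⟩
private def t : G4 := ⟨tp, tp_mem⟩

private lemma gen12 : ∀ g : G4,
    g = 1 ∨ g = s*t*s⁻¹ ∨ g = t ∨ g = t*(s*t*s⁻¹) ∨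
    g = s ∨ g = s*(s*t*s⁻¹) ∨ g = s*t ∨ g = s*(t*(s*t*s⁻¹)) ∨
    g = s^2 ∨ g = s^2*(s*t*s⁻¹) ∨ g = s^2*t ∨ g = s^2*(t*(s*t*s⁻¹)) := by decide

private lemma conj_t :
    ∀ d : G4, d*t*d⁻¹ = t ∨ d*t*d⁻¹ = s*t*s⁻¹ ∨ d*t*d⁻¹ = s^2*t*(s^2)⁻¹ := by decide

private lemma hom_fix (f : G4 →* G4) (hs : f s = s) (ht : f t = t) : ∀ g : G4, f g = g := by
  intro g
  rcases gen12 g with h|h|h|h|h|h|h|h|h|h|h|h <;> subst h <;>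
    simp only [map_one, map_mul, map_pow, map_inv, hs, ht]

end A4Aux

theorem alternatingGroupFour_propertyA : HasPropertyA ↥(alternatingGroup (Fin 4)) := by
  intro φ hφ
  obtain ⟨c, hc⟩ := isConj_iff.mp (hφ s)
  obtain ⟨d, hd⟩ := isConj_iff.mp (hφ t)
  have he : (c⁻¹*d) * t * (c⁻¹*d)⁻¹ = c⁻¹ * φ t * c := by rw [← hd]; group
  have key : ∃ a : G4, a * s = s * a ∧ c⁻¹ * φ t * c = a * t * a⁻¹ := by
    rcases conj_t (c⁻¹*d) with h|h|h
    · exact ⟨1, by group, by rw [← he, h]; group⟩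
    · exact ⟨s, rfl, by rw [← he, h]⟩
    · exact ⟨s^2, by group, by rw [← he, h]⟩
  obtain ⟨a, hcomm, hat⟩ := key
  refine ⟨c * a, fun g => ?_⟩
  set f : G4 →* G4 := (MulAut.conj (c*a)⁻¹).toMonoidHom.comp φ.toMonoidHom with hfdef
  have happ : ∀ g : G4, f g = (c*a)⁻¹ * φ g * (c*a) := by
    intro g; simp only [hfdef, MonoidHom.comp_apply, MulEquiv.coe_toMonoidHom,
      MulEquiv.toMonoidHom_eq_coe, MonoidHom.coe_coe, MulAut.conj_apply]; group
  have hfs : f s = s := by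
    rw [happ, ← hc]
    have h1 : a⁻¹ * s * a = s := by rw [mul_assoc, ← hcomm]; group
    calc (c*a)⁻¹ * (c * s * c⁻¹) * (c*a) = a⁻¹ * s * a := by group
    _ = s := h1
  have hft : f t = t := by
    rw [happ]
    calc (c*a)⁻¹ * φ t * (c*a) = a⁻¹ * (c⁻¹ * φ t * c) * a := by group
    _ = a⁻¹ * (a * t * a⁻¹) * a := by rw [hat]
    _ = t := by group
  have hfix := hom_fix f hfs hft g
  rw [happ] at hfix
  have h2 : φ g = (c*a) * ((c*a)⁻¹ * φ g * (c*a)) * (c*a)⁻¹ := by group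
  rw [h2, hfix]
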